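/- Let n be a natural number with n > 1. Then the integer sum ∑_{d ∣ n} μ(n/d)·2^{d−1}, taken over the positive divisors d of n, is strictly positive. -/

import Mathlib

open Finset in
lemma geom_two_sum_int (m : ℕ) : ∑ j ∈ Finset.range m, (2:ℤ)^j = 2^m - 1 := by
  induction m with
  | zero => simp
  | succ k ih => rw [Finset.sum_range_succ, ih]; ring

open ArithmeticFunction ArithmeticFunction.Moebius in
theorem moebius_sum_two_pow_pred_pos (n : ℕ) (hn : 1 < n) :
    0 < ∑ d ∈ n.divisors, (μ (n / d) : ℤ) * (2 : ℤ) ^ (d - 1) := by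
  have hn0 : n ≠ 0 := by omega
  have hnmem : n ∈ n.divisors := Nat.mem_divisors_self n hn0
  rw [← Finset.add_sum_erase _ _ hnmem]
  have h1 : (μ (n / n) : ℤ) * 2 ^ (n - 1) = 2 ^ (n - 1) := by
    rw [Nat.div_self (by omega)]; simp
  rw [h1]
  set S := n.divisors.erase n with hS
  have hbound : |∑ d ∈ S, (μ (n / d) : ℤ) * 2 ^ (d - 1)| < 2 ^ (n - 1) := by
    calc |∑ d ∈ S, (μ (n / d) : ℤ) * 2 ^ (d - 1)|
        ≤ ∑ d ∈ S, |(μ (n / d) : ℤ) * 2 ^ (d - 1)| := Finset.abs_sum_le_sum_abs _ _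
      _ ≤ ∑ d ∈ S, (2:ℤ) ^ (d - 1) := by
          apply Finset.sum_le_sum
          intro d _
          rw [abs_mul]
          have h2 : |(2:ℤ) ^ (d-1)| = 2 ^ (d-1) := abs_of_nonneg (by positivity)
          rw [h2]
          have := ArithmeticFunction.abs_moebius_le_one (n := n / d)
          nlinarith [abs_nonneg ((μ (n/d) : ℤ)), pow_pos (by norm_num : (0:ℤ) < 2) (d-1)]
      _ = ∑ j ∈ S.image (· - 1), (2:ℤ) ^ j := by
          rw [Finset.sum_image]
          intro a ha b hb hab
          have ha1 : 1 ≤ a := Nat.pos_of_mem_divisors (Finset.mem_of_mem_erase ha)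
          have hb1 : 1 ≤ b := Nat.pos_of_mem_divisors (Finset.mem_of_mem_erase hb)
          simp only at hab
          omega
      _ ≤ ∑ j ∈ Finset.range (n / 2), (2:ℤ) ^ j := by
          apply Finset.sum_le_sum_of_subset_of_nonneg
          · intro j hj
            simp only [Finset.mem_image] at hj
            obtain ⟨d, hd, rfl⟩ := hj
            have hdvd : d ∣ n := Nat.dvd_of_mem_divisors (Finset.mem_of_mem_erase hd)
            have hdne : d ≠ n := Finset.ne_of_mem_erase hd
            have hd1 : 1 ≤ d := Nat.pos_of_mem_divisors (Finset.mem_of_mem_erase hd)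
            have hlt : d < n := lt_of_le_of_ne (Nat.le_of_dvd (by omega) hdvd) hdne
            have h2d : 2 * d ≤ n := by
              obtain ⟨k, hk⟩ := hdvd
              have hk2 : 2 ≤ k := by
                rcases Nat.lt_or_ge k 2 with h | h
                · interval_cases k <;> omega
                · exact h
              nlinarith
            rw [Finset.mem_range]; omega
          · intros; positivity
      _ = 2 ^ (n / 2) - 1 := geom_two_sum_int _
      _ < 2 ^ (n - 1) := by
          have : (2:ℤ) ^ (n / 2) ≤ 2 ^ (n - 1) :=
            pow_le_pow_right₀ (by norm_num) (by omega)
          omega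
  rw [abs_lt] at hbound
  linarith [hbound.1]
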